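/- Let ℓ = k^s be an odd prime power (k an odd prime, s a positive integer), let p be a prime and let q be a positive integer such that p > q, p ≠ k and k ∤ (p − 1). If n is a positive integer with p − q ≤ n ≤ 2p − q − 1, then the product (1^ℓ + q^ℓ)(2^ℓ + q^ℓ) ⋯ (n^ℓ + q^ℓ) is not a powerful number. -/

import Mathlib

/-- A positive integer `t` is powerful if `t > 1` and `p ^ 2 ∣ t`
for every prime divisor `p` of `t`. -/
def Powerful (t : ℕ) : Prop := 1 < t ∧ ∀ p : ℕ, p.Prime → p ∣ t → p ^ 2 ∣ t

theorem stmt4 (k s ℓ p q n : ℕ) (hk : k.Prime) (hkodd : Odd k) (hs : 0 < s)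
    (hℓ : ℓ = k ^ s) (hp : p.Prime) (hq : 0 < q) (hpq : q < p) (hpk : p ≠ k)
    (hndvd : ¬ k ∣ (p - 1)) (hn : 0 < n) (h1 : p - q ≤ n) (h2 : n ≤ 2 * p - q - 1) :
    ¬ Powerful (∏ a ∈ Finset.Icc 1 n, (a ^ ℓ + q ^ ℓ)) := by
  rintro ⟨-, ht⟩
  have hℓodd : Odd ℓ := hℓ ▸ hkodd.pow
  have hqp : q ≤ p := hpq.le
  have hppos : 0 < p := hp.pos
  have hp2 : 2 ≤ p := hp.two_le
  have hpqpos : 0 < p - q := by omega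
  have hℓpos : 0 < ℓ := hℓ ▸ pow_pos hk.pos s
  have hmem : p - q ∈ Finset.Icc 1 n := by
    rw [Finset.mem_Icc]; omega
  haveI : Fact p.Prime := ⟨hp⟩
  have hqne : (q : ZMod p) ≠ 0 := by
    rw [Ne, ZMod.natCast_eq_zero_iff]
    intro h
    exact absurd (Nat.le_of_dvd hq h) (by omega)
  have hkne : (k : ZMod p) ≠ 0 := by
    rw [Ne, ZMod.natCast_eq_zero_iff]
    intro h
    exact hpk ((Nat.prime_dvd_prime_iff_eq hp hk).mp h)
  have hcast : ((p - q : ℕ) : ZMod p) = -(q : ZMod p) := by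
    rw [Nat.cast_sub hqp, ZMod.natCast_self, zero_sub]
  -- p divides the factor at a = p - q
  have hdvdA : p ∣ (p - q) ^ ℓ + q ^ ℓ := by
    rw [← ZMod.natCast_eq_zero_iff]
    push_cast
    rw [hcast, hℓodd.neg_pow]
    ring
  -- p divides no other factor
  have huniq : ∀ a ∈ Finset.Icc 1 n, p ∣ a ^ ℓ + q ^ ℓ → a = p - q := by
    intro a ha hdvd
    rw [Finset.mem_Icc] at ha
    rw [← ZMod.natCast_eq_zero_iff] at hdvd
    push_cast at hdvd
    have hkey : (a : ZMod p) ^ ℓ = (-(q : ZMod p)) ^ ℓ := by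
      rw [hℓodd.neg_pow]; linear_combination hdvd
    have hane : (a : ZMod p) ≠ 0 := by
      intro h0
      rw [h0, zero_pow hℓpos.ne', hℓodd.neg_pow] at hkey
      exact hqne (pow_eq_zero_iff hℓpos.ne' |>.mp (neg_eq_zero.mp hkey.symm))
    have hcop : (Nat.card (ZMod p)ˣ).Coprime ℓ := by
      have : Nat.card (ZMod p)ˣ = p - 1 := by
        rw [Nat.card_eq_fintype_card, ZMod.card_units]
      rw [this, hℓ]
      exact (((hk.coprime_iff_not_dvd).mpr hndvd).symm).pow_right s
    have hau : IsUnit (a : ZMod p) := hane.isUnit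
    have hbu : IsUnit (-(q : ZMod p)) := (neg_ne_zero.mpr hqne).isUnit
    have : hau.unit = hbu.unit := by
      apply hcop.pow_left_bijective.injective
      ext
      simpa using hkey
    have heq : (a : ZMod p) = ((p - q : ℕ) : ZMod p) := by
      rw [hcast]
      have := congrArg Units.val this
      simpa using this
    have hmod : a ≡ p - q [MOD p] := (ZMod.natCast_eq_natCast_iff a (p - q) p).mp heq
    rcases le_or_gt a (p - q) with hle | hlt
    · have hd : p ∣ p - q - a := (Nat.modEq_iff_dvd' hle).mp hmod
      have := Nat.eq_zero_of_dvd_of_lt hd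
      omega
    · have hd : p ∣ a - (p - q) := (Nat.modEq_iff_dvd' hlt.le).mp hmod.symm
      have := Nat.eq_zero_of_dvd_of_lt hd
      omega
  -- p^2 does not divide the factor at a = p - q
  have hA2 : ¬ p ^ 2 ∣ (p - q) ^ ℓ + q ^ ℓ := by
    intro hdvd
    set x : ℤ := (p : ℤ) - q with hx
    set y : ℤ := -(q : ℤ) with hy
    have hgeom : (∑ i ∈ Finset.range ℓ, x ^ i * y ^ (ℓ - 1 - i)) * (x - y) = x ^ ℓ - y ^ ℓ :=
      geom_sum₂_mul x y ℓ
    have hAint : (((p - q) ^ ℓ + q ^ ℓ : ℕ) : ℤ) = x ^ ℓ - y ^ ℓ := by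
      rw [hy, hℓodd.neg_pow]
      push_cast [hqp]
      ring
    have hxy : x - y = (p : ℤ) := by rw [hx, hy]; ring
    have hfact : (∑ i ∈ Finset.range ℓ, x ^ i * y ^ (ℓ - 1 - i)) * (p : ℤ)
        = (((p - q) ^ ℓ + q ^ ℓ : ℕ) : ℤ) := by
      rw [← hxy, hgeom, hAint]
    have hdvdZ : ((p : ℤ)) ^ 2 ∣ (∑ i ∈ Finset.range ℓ, x ^ i * y ^ (ℓ - 1 - i)) * (p : ℤ) := by
      rw [hfact]
      exact_mod_cast Int.natCast_dvd_natCast.mpr hdvd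
    have hdvdS : (p : ℤ) ∣ ∑ i ∈ Finset.range ℓ, x ^ i * y ^ (ℓ - 1 - i) := by
      rw [pow_two] at hdvdZ
      have hpne : (p : ℤ) ≠ 0 := by exact_mod_cast hppos.ne'
      exact (mul_dvd_mul_iff_right hpne).mp hdvdZ
    have hS0 : ((∑ i ∈ Finset.range ℓ, x ^ i * y ^ (ℓ - 1 - i) : ℤ) : ZMod p) = 0 := by
      rw [ZMod.intCast_zmod_eq_zero_iff_dvd]
      exact_mod_cast hdvdS
    have hSval : ((∑ i ∈ Finset.range ℓ, x ^ i * y ^ (ℓ - 1 - i) : ℤ) : ZMod p)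
        = (ℓ : ZMod p) * (q : ZMod p) ^ (ℓ - 1) := by
      push_cast
      have hxval : ((x : ℤ) : ZMod p) = -(q : ZMod p) := by
        rw [hx]; push_cast; simp
      have hyval : ((y : ℤ) : ZMod p) = -(q : ZMod p) := by
        rw [hy]; push_cast; ring
      calc ∑ i ∈ Finset.range ℓ, ((x : ℤ) : ZMod p) ^ i * ((y : ℤ) : ZMod p) ^ (ℓ - 1 - i)
          = ∑ i ∈ Finset.range ℓ, (-(q : ZMod p)) ^ (ℓ - 1) := by
            apply Finset.sum_congr rfl
            intro i hi
            rw [Finset.mem_range] at hi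
            rw [hxval, hyval, ← pow_add]
            congr 1
            omega
        _ = (ℓ : ZMod p) * (q : ZMod p) ^ (ℓ - 1) := by
            rw [Finset.sum_const, Finset.card_range, nsmul_eq_mul]
            congr 1
            exact (Nat.Odd.sub_odd hℓodd odd_one).neg_pow _
    rw [hSval] at hS0
    have hℓne : (ℓ : ZMod p) ≠ 0 := by
      rw [hℓ]; push_cast; exact pow_ne_zero s hkne
    exact (mul_ne_zero hℓne (pow_ne_zero _ hqne)) hS0
  -- assemble
  have hdvdT : p ∣ ∏ a ∈ Finset.Icc 1 n, (a ^ ℓ + q ^ ℓ) :=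
    hdvdA.trans (Finset.dvd_prod_of_mem _ hmem)
  have h2T := ht p hp hdvdT
  rw [← Finset.mul_prod_erase _ _ hmem] at h2T
  have hpB : ¬ p ∣ ∏ a ∈ (Finset.Icc 1 n).erase (p - q), (a ^ ℓ + q ^ ℓ) := by
    intro h
    obtain ⟨a, hamem, hadvd⟩ := hp.prime.exists_mem_finset_dvd h
    have := huniq a (Finset.mem_of_mem_erase hamem) hadvd
    exact (Finset.ne_of_mem_erase hamem) this
  have hcop2 : (p ^ 2).Coprime (∏ a ∈ (Finset.Icc 1 n).erase (p - q), (a ^ ℓ + q ^ ℓ)) :=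
    ((hp.coprime_iff_not_dvd).mpr hpB).pow_left 2
  exact hA2 (hcop2.dvd_of_dvd_mul_right h2T)
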